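/- Inversion formula for the generalized Appell function: Φ_{−μ,−ν}(τ,u,v,{d_r}) = (−1)^M · e^{−2πi B(Σ_{r=1}^M d_r, u)} · Φ_{μ,ν}(τ, −u, −v + τ·Σ_{r=1}^M d_r, {d_r}). -/
import Mathlib


open scoped BigOperators Real
open Complex

/-- The complex bilinear form `B(x,y) = xᵀ 𝐀 y` attached to an integer matrix `𝐀`,
extended bilinearly to `ℂ^N`. -/
noncomputable def bilC {N : ℕ} (A : Matrix (Fin N) (Fin N) ℤ) (x y : Fin N → ℂ) : ℂ :=
  ∑ i, ∑ j, x i * (A i j : ℂ) * y j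

/-- The real bilinear form `B(x,y) = xᵀ 𝐀 y`. -/
noncomputable def bilR {N : ℕ} (A : Matrix (Fin N) (Fin N) ℤ) (x y : Fin N → ℝ) : ℝ :=
  ∑ i, ∑ j, x i * (A i j : ℝ) * y j

/-- The generalized Appell function `Φ_{μ,ν}(τ,u,v,{d_r})`:
`e^{2πi B(ν,u)} · Σ_{k ∈ ℤ^N} e^{πiτ Q(k+μ−ν) + 2πiτ B(ν,k+μ−ν) + 2πi B(v,k+μ−ν)}
  / ∏_{r=1}^M (1 − e^{2πi B(d_r,u)} e^{2πiτ B(d_r,k+μ−ν)})`. -/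
noncomputable def appellPhi {N M : ℕ} (A : Matrix (Fin N) (Fin N) ℤ)
    (d : Fin M → Fin N → ℤ) (τ : ℂ) (u v : Fin N → ℂ) (μ ν : Fin N → ℝ) : ℂ :=
  Complex.exp (2 * (π : ℂ) * I * bilC A (fun i => (ν i : ℂ)) u) *
  ∑' k : Fin N → ℤ,
    Complex.exp ((π : ℂ) * I * τ *
        bilC A (fun i => (k i : ℂ) + (μ i : ℂ) - (ν i : ℂ))
               (fun i => (k i : ℂ) + (μ i : ℂ) - (ν i : ℂ))
      + 2 * (π : ℂ) * I * τ *
        bilC A (fun i => (ν i : ℂ)) (fun i => (k i : ℂ) + (μ i : ℂ) - (ν i : ℂ))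
      + 2 * (π : ℂ) * I *
        bilC A v (fun i => (k i : ℂ) + (μ i : ℂ) - (ν i : ℂ))) /
    ∏ r, (1 - Complex.exp (2 * (π : ℂ) * I * bilC A (fun i => (d r i : ℂ)) u) *
      Complex.exp (2 * (π : ℂ) * I * τ *
        bilC A (fun i => (d r i : ℂ)) (fun i => (k i : ℂ) + (μ i : ℂ) - (ν i : ℂ))))

section AuxAppell

lemma bilC_neg_left {N : ℕ} (A : Matrix (Fin N) (Fin N) ℤ) (x y : Fin N → ℂ) :
    bilC A (fun i => -x i) y = -bilC A x y := by
  simp [bilC, Finset.sum_neg_distrib]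

lemma bilC_neg_right {N : ℕ} (A : Matrix (Fin N) (Fin N) ℤ) (x y : Fin N → ℂ) :
    bilC A x (fun i => -y i) = -bilC A x y := by
  simp [bilC, Finset.sum_neg_distrib]

lemma bilC_add_left {N : ℕ} (A : Matrix (Fin N) (Fin N) ℤ) (x y z : Fin N → ℂ) :
    bilC A (fun i => x i + y i) z = bilC A x z + bilC A y z := by
  simp [bilC, add_mul, Finset.sum_add_distrib]

lemma bilC_smul_left {N : ℕ} (A : Matrix (Fin N) (Fin N) ℤ) (c : ℂ) (x y : Fin N → ℂ) :
    bilC A (fun i => c * x i) y = c * bilC A x y := by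
  simp only [bilC, Finset.mul_sum]
  exact Finset.sum_congr rfl fun i _ => Finset.sum_congr rfl fun j _ => by ring

lemma bilC_sum_left {N M₀ : ℕ} (A : Matrix (Fin N) (Fin N) ℤ) (x : Fin M₀ → Fin N → ℂ)
    (y : Fin N → ℂ) :
    bilC A (fun i => ∑ r, x r i) y = ∑ r, bilC A (x r) y := by
  simp only [bilC, Finset.sum_mul]
  calc ∑ i, ∑ j, ∑ r, x r i * (A i j : ℂ) * y j
      = ∑ i, ∑ r, ∑ j, x r i * (A i j : ℂ) * y j :=
        Finset.sum_congr rfl fun i _ => Finset.sum_comm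
    _ = ∑ r, ∑ i, ∑ j, x r i * (A i j : ℂ) * y j := Finset.sum_comm

lemma appell_term_eq {M : ℕ} (p i t q bν bv : ℂ) (a c : Fin M → ℂ) :
    Complex.exp (p * i * t * q + 2 * p * i * t * bν + 2 * p * i * -bv) /
      ∏ r, (1 - Complex.exp (2 * p * i * a r) * Complex.exp (2 * p * i * t * -c r)) =
    (-1 : ℂ) ^ M * Complex.exp (-(2 * p * i * ∑ r, a r)) *
    (Complex.exp (p * i * t * q + 2 * p * i * t * bν + 2 * p * i * (-bv + t * ∑ r, c r)) /
      ∏ r, (1 - Complex.exp (2 * p * i * -a r) * Complex.exp (2 * p * i * t * c r))) := by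
  have hfac : ∀ r : Fin M, 1 - Complex.exp (2 * p * i * a r) * Complex.exp (2 * p * i * t * -c r)
      = -Complex.exp (2 * p * i * a r - 2 * p * i * t * c r) *
        (1 - Complex.exp (2 * p * i * -a r) * Complex.exp (2 * p * i * t * c r)) := by
    intro r
    rw [← Complex.exp_add, ← Complex.exp_add, mul_sub, mul_one, neg_mul, ← Complex.exp_add,
      show 2 * p * i * a r - 2 * p * i * t * c r + (2 * p * i * -a r + 2 * p * i * t * c r) = 0 by
        ring,
      Complex.exp_zero,
      show 2 * p * i * a r + 2 * p * i * t * -c r = 2 * p * i * a r - 2 * p * i * t * c r by ring]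
    ring
  rw [Finset.prod_congr rfl fun r _ => hfac r, Finset.prod_mul_distrib]
  have hneg : ∏ r : Fin M, -Complex.exp (2 * p * i * a r - 2 * p * i * t * c r)
      = (-1 : ℂ) ^ M * Complex.exp (2 * p * i * ∑ r, a r - 2 * p * i * t * ∑ r, c r) := by
    calc ∏ r : Fin M, -Complex.exp (2 * p * i * a r - 2 * p * i * t * c r)
        = ∏ r : Fin M, (-1 : ℂ) * Complex.exp (2 * p * i * a r - 2 * p * i * t * c r) := by
          simp
      _ = (∏ _r : Fin M, (-1 : ℂ)) *
          ∏ r : Fin M, Complex.exp (2 * p * i * a r - 2 * p * i * t * c r) :=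
          Finset.prod_mul_distrib
      _ = (-1 : ℂ) ^ M * Complex.exp (∑ r, (2 * p * i * a r - 2 * p * i * t * c r)) := by
          rw [Finset.prod_const, Finset.card_univ, Fintype.card_fin, Complex.exp_sum]
      _ = (-1 : ℂ) ^ M * Complex.exp (2 * p * i * ∑ r, a r - 2 * p * i * t * ∑ r, c r) := by
          rw [Finset.sum_sub_distrib, ← Finset.mul_sum, ← Finset.mul_sum]
  rw [hneg, ← div_div, ← mul_div_assoc]
  congr 1
  rw [div_eq_iff (mul_ne_zero (pow_ne_zero _ (by norm_num)) (Complex.exp_ne_zero _))]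
  have h2 : ((-1 : ℂ) ^ M) * ((-1 : ℂ) ^ M) = 1 := by rw [← mul_pow]; norm_num
  have e3 : Complex.exp (-(2 * p * i * ∑ r, a r)) *
      Complex.exp (p * i * t * q + 2 * p * i * t * bν + 2 * p * i * (-bv + t * ∑ r, c r)) *
      Complex.exp (2 * p * i * ∑ r, a r - 2 * p * i * t * ∑ r, c r)
      = Complex.exp (p * i * t * q + 2 * p * i * t * bν + 2 * p * i * -bv) := by
    rw [← Complex.exp_add, ← Complex.exp_add]
    congr 1
    ring
  calc Complex.exp (p * i * t * q + 2 * p * i * t * bν + 2 * p * i * -bv)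
      = 1 * Complex.exp (p * i * t * q + 2 * p * i * t * bν + 2 * p * i * -bv) :=
        (one_mul _).symm
    _ = (((-1 : ℂ) ^ M) * ((-1 : ℂ) ^ M)) *
        (Complex.exp (-(2 * p * i * ∑ r, a r)) *
          Complex.exp (p * i * t * q + 2 * p * i * t * bν + 2 * p * i * (-bv + t * ∑ r, c r)) *
          Complex.exp (2 * p * i * ∑ r, a r - 2 * p * i * t * ∑ r, c r)) := by rw [h2, e3]
    _ = (-1 : ℂ) ^ M * Complex.exp (-(2 * p * i * ∑ r, a r)) *
        Complex.exp (p * i * t * q + 2 * p * i * t * bν + 2 * p * i * (-bv + t * ∑ r, c r)) *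
        ((-1 : ℂ) ^ M * Complex.exp (2 * p * i * ∑ r, a r - 2 * p * i * t * ∑ r, c r)) := by
        ring

end AuxAppell

/-- Inversion formula for the generalized Appell function:
`Φ_{−μ,−ν}(τ,u,v,{d_r})
  = (−1)^M · e^{−2πi B(Σ_r d_r, u)} · Φ_{μ,ν}(τ, −u, −v + τ·Σ_r d_r, {d_r})`. -/
theorem appellPhi_inversion
    {N M : ℕ} (hN : 1 ≤ N) (hM : 1 ≤ M) (hMN : M ≤ N)
    (A : Matrix (Fin N) (Fin N) ℤ) (hAsymm : A.IsSymm)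
    (hApos : (A.map ((↑) : ℤ → ℝ)).PosDef)
    (d : Fin M → Fin N → ℤ)
    (hd : LinearIndependent ℝ (fun r => fun i => (d r i : ℝ)))
    (τ : ℂ) (hτ : 0 < τ.im) (u v : Fin N → ℂ)
    (μ ν : Fin N → ℝ)
    (hν : ν ∈ Submodule.span ℝ (Set.range (fun r => fun i => (d r i : ℝ)))) :
    appellPhi A d τ u v (fun i => -μ i) (fun i => -ν i) =
      (-1 : ℂ) ^ M *
      Complex.exp (-(2 * (π : ℂ) * I *
        bilC A (fun i => ((∑ r, d r i : ℤ) : ℂ)) u)) *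
      appellPhi A d τ (fun i => -u i)
        (fun i => -v i + τ * ((∑ r, d r i : ℤ) : ℂ)) μ ν := by
  simp only [appellPhi, Complex.ofReal_neg, Int.cast_sum]
  conv_lhs => rw [← (Equiv.neg (Fin N → ℤ)).tsum_eq]
  simp only [Equiv.neg_apply, Pi.neg_apply, Int.cast_neg]
  simp only [show ∀ (a b c : ℂ), -a + -b - -c = -(a + b - c) from fun a b c => by ring]
  simp only [bilC_add_left, bilC_smul_left, bilC_sum_left, bilC_neg_left, bilC_neg_right,
    neg_neg]
  simp only [appell_term_eq, tsum_mul_left]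
  ring
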